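/- Let λ be a partition of n and t a standard λ-tableau with conjugate tableau t′. Then d(t)·d(t′)⁻¹ = w_λ and ℓ(d(t)) + ℓ(d(t′)) = ℓ(w_λ), where w_λ = d(t_λ) and d(s) denotes the unique permutation with t^λ · d(s) = s (resp. t^{λ′} · d(s′) = s′ for tableaux of shape λ′). -/

import Mathlib

attribute [local instance] Classical.propDecidable

noncomputable section

open LaurentPolynomial

/-- The ground ring `S = ℤ[q,q⁻¹]`. -/
abbrev Sring : Type := LaurentPolynomial ℤ

/-- The element `q`. -/
def qq : Sring := T 1

/-- The element `q⁻¹`. -/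
def qinv : Sring := T (-1)

/-- `(-q)^{-k}`. -/
def nqinvpow (k : ℕ) : Sring := (-1 : Sring) ^ k * T (-(k : ℤ))

/-- Generators of the braids-and-ties algebra. -/
inductive BTGen (n : ℕ) : Type
  | g : Fin (n - 1) → BTGen n
  | e : Fin (n - 1) → BTGen n

/-- The free algebra on the generators. -/
abbrev FreeBT (n : ℕ) := FreeAlgebra Sring (BTGen n)

def FG {n : ℕ} (i : Fin (n - 1)) : FreeBT n := FreeAlgebra.ι Sring (BTGen.g i)
def FE {n : ℕ} (i : Fin (n - 1)) : FreeBT n := FreeAlgebra.ι Sring (BTGen.e i)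

/-- The defining relations of the braids-and-ties algebra. -/
inductive BTRel (n : ℕ) : FreeBT n → FreeBT n → Prop
  | gg_far : ∀ i j : Fin (n - 1), ((i : ℕ) + 1 < (j : ℕ) ∨ (j : ℕ) + 1 < (i : ℕ)) →
      BTRel n (FG i * FG j) (FG j * FG i)
  | ge_same : ∀ i : Fin (n - 1), BTRel n (FG i * FE i) (FE i * FG i)
  | braid : ∀ i j : Fin (n - 1), ((i : ℕ) + 1 = (j : ℕ) ∨ (j : ℕ) + 1 = (i : ℕ)) →
      BTRel n (FG i * FG j * FG i) (FG j * FG i * FG j)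
  | egg : ∀ i j : Fin (n - 1), ((i : ℕ) + 1 = (j : ℕ) ∨ (j : ℕ) + 1 = (i : ℕ)) →
      BTRel n (FE i * FG j * FG i) (FG j * FG i * FE j)
  | eeg : ∀ i j : Fin (n - 1), ((i : ℕ) + 1 = (j : ℕ) ∨ (j : ℕ) + 1 = (i : ℕ)) →
      BTRel n (FE i * FE j * FG j) (FE i * FG j * FE i)
  | ege : ∀ i j : Fin (n - 1), ((i : ℕ) + 1 = (j : ℕ) ∨ (j : ℕ) + 1 = (i : ℕ)) →
      BTRel n (FE i * FG j * FE i) (FG j * FE i * FE j)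
  | ee_comm : ∀ i j : Fin (n - 1), BTRel n (FE i * FE j) (FE j * FE i)
  | ge_far : ∀ i j : Fin (n - 1), ((i : ℕ) + 1 < (j : ℕ) ∨ (j : ℕ) + 1 < (i : ℕ)) →
      BTRel n (FG i * FE j) (FE j * FG i)
  | e_idem : ∀ i : Fin (n - 1), BTRel n (FE i * FE i) (FE i)
  | g_quad : ∀ i : Fin (n - 1), BTRel n (FG i * FG i) (1 + (qq - qinv) • (FE i * FG i))

/-- The braids-and-ties algebra `E_n(q)`. -/
abbrev BT (n : ℕ) := RingQuot (BTRel n)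

def btπ (n : ℕ) : FreeBT n →ₐ[Sring] BT n := RingQuot.mkAlgHom Sring (BTRel n)

/-- The generator `g_i`. -/
def bg {n : ℕ} (i : Fin (n - 1)) : BT n := btπ n (FG i)
/-- The generator `e_i`. -/
def be {n : ℕ} (i : Fin (n - 1)) : BT n := btπ n (FE i)
/-- The element `g_i + (q⁻¹ - q) e_i`. -/
def bginv {n : ℕ} (i : Fin (n - 1)) : BT n := bg i + (qinv - qq) • be i

/-! ### Symmetric group combinatorics -/

def loF {n : ℕ} (i : Fin (n - 1)) : Fin n := ⟨i, by have := i.isLt; omega⟩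
def hiF {n : ℕ} (i : Fin (n - 1)) : Fin n := ⟨(i : ℕ) + 1, by have := i.isLt; omega⟩

/-- The simple transposition `s_i = (i, i+1)`. -/
def sT {n : ℕ} (i : Fin (n - 1)) : Equiv.Perm (Fin n) := Equiv.swap (loF i) (hiF i)

/-- The Coxeter length of a permutation, as the number of inversions. -/
def invLen {n : ℕ} (w : Equiv.Perm (Fin n)) : ℕ :=
  ((Finset.univ : Finset (Fin n × Fin n)).filter (fun p => p.1 < p.2 ∧ w p.2 < w p.1)).card

/-- `l` is a reduced word for `w`. -/
def IsRedWord {n : ℕ} (l : List (Fin (n - 1))) (w : Equiv.Perm (Fin n)) : Prop :=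
  w = (l.map sT).prod ∧ l.length = invLen w

/-- `gw` assigns to every permutation the product of the `g_i` along a reduced word;
this characterizes the elements `g_w` of the braids-and-ties algebra. -/
def GwSpec {n : ℕ} (gw : Equiv.Perm (Fin n) → BT n) : Prop :=
  ∀ w l, IsRedWord l w → gw w = (l.map bg).prod

/-! ### The elements `E_{i,j}` and `E_A` -/

def EijAux {n : ℕ} (jm1 : ℕ) : ℕ → BT n
  | 0 => if h : jm1 < n - 1 then be ⟨jm1, h⟩ else 1
  | (k + 1) => if h : jm1 - (k + 1) < n - 1 then
      bg ⟨jm1 - (k + 1), h⟩ * EijAux jm1 k * bginv ⟨jm1 - (k + 1), h⟩ else 1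

/-- `E_{i,j}`, defined by `E_{j-1,j} = e_{j-1}` and `E_{i,j} = g_i E_{i+1,j} g_i⁻¹`. -/
def Eij {n : ℕ} (i j : ℕ) : BT n := EijAux (j - 1) (j - 1 - i)

/-- `E_A` for a set partition `A` of `{1,…,n}` (as a setoid on `Fin n`):
the product of the `E_{i,j}` over pairs `i < j` in a common block of `A`. -/
def EAset {n : ℕ} (A : Setoid (Fin n)) : BT n :=
  ((List.finRange n).map (fun i : Fin n =>
    ((List.finRange n).map (fun j : Fin n =>
      if (i : ℕ) < (j : ℕ) ∧ A.r i j then Eij (i : ℕ) (j : ℕ) else 1)).prod)).prod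

instance setoidFinFintype (n : ℕ) : Fintype (Setoid (Fin n)) := by
  classical
  have : Fintype Prop := Fintype.ofEquiv Bool Equiv.propEquivBool.symm
  exact Fintype.ofInjective (fun A : Setoid (Fin n) => fun x y => A.r x y)
    (fun A B h => by
      have hr : A.r = B.r := by funext x y; exact congrFun (congrFun h x) y
      cases A; cases B; cases hr; rfl)

/-- The right action of a permutation on a set partition. -/
def permSetoid {n : ℕ} (A : Setoid (Fin n)) (w : Equiv.Perm (Fin n)) : Setoid (Fin n) :=
  ⟨fun x y => A.r (w⁻¹ x) (w⁻¹ y),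
    ⟨fun _ => A.iseqv.refl _, fun h => A.iseqv.symm h, fun h1 h2 => A.iseqv.trans h1 h2⟩⟩

/-- `mu` is the Möbius function of the lattice of set partitions (refinement order). -/
def MuSpec {n : ℕ} (mu : Setoid (Fin n) → Setoid (Fin n) → ℤ) : Prop :=
  ∀ A C : Setoid (Fin n), A ≤ C →
    (∑ B ∈ Finset.univ.filter (fun B => A ≤ B ∧ B ≤ C), mu A B) = if A = C then 1 else 0

/-- The Möbius idempotent `𝔼_A = Σ_{B ⊇ A} μ(A,B) E_B`. -/
def bE {n : ℕ} (mu : Setoid (Fin n) → Setoid (Fin n) → ℤ) (A : Setoid (Fin n)) : BT n :=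
  ∑ B ∈ Finset.univ.filter (fun B => A ≤ B), mu A B • EAset B

/-- The type of a set partition: the multiset of its block sizes. -/
def typeOf {n : ℕ} (A : Setoid (Fin n)) : Multiset ℕ :=
  (((Finset.univ : Finset (Fin n)).filter (fun x => ∀ y, A.r x y → x ≤ y)).val).map
    (fun x => (Finset.univ.filter (fun y => A.r x y)).card)

/-- The central idempotent `𝔼_α = Σ_{|A| = α} 𝔼_A`. -/
def Ealpha {n : ℕ} (mu : Setoid (Fin n) → Setoid (Fin n) → ℤ) (α : Nat.Partition n) : BT n :=
  ∑ A ∈ Finset.univ.filter (fun A : Setoid (Fin n) => typeOf A = α.parts), bE mu A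

/-! ### Compositions and Young subgroups -/

/-- Index of the block of the composition `c` containing `x` (0-based). -/
def blockIdx (c : List ℕ) (x : ℕ) : ℕ :=
  (List.range c.length).countP (fun k => decide ((c.take (k + 1)).sum ≤ x))

/-- Membership in the Young subgroup of the composition `c`. -/
def inYoung {n : ℕ} (c : List ℕ) (w : Equiv.Perm (Fin n)) : Prop :=
  ∀ x : Fin n, blockIdx c ((w x : ℕ)) = blockIdx c (x : ℕ)

/-- A multicomposition with `r` components, given as `lam : ℕ → List ℕ`. -/
def compList (r : ℕ) (lam : ℕ → List ℕ) : List ℕ := (List.range r).map (fun i => (lam i).sum)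

def flattenM (r : ℕ) (lam : ℕ → List ℕ) : List ℕ := ((List.range r).map lam).flatten

/-- `lam` is a multicomposition of `n` with `r` components. -/
def MC (n r : ℕ) (lam : ℕ → List ℕ) : Prop :=
  (∀ i, r ≤ i → lam i = []) ∧ (compList r lam).sum = n

/-- A partition, as a weakly decreasing list of positive integers. -/
def IsPart (c : List ℕ) : Prop := c.Pairwise (fun a b => b ≤ a) ∧ ∀ x ∈ c, 0 < x

/-- The multicomposition `lam` is of type `α`. -/
def MCtype (n r : ℕ) (lam : ℕ → List ℕ) (α : Nat.Partition n) : Prop :=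
  (↑(compList r lam) : Multiset ℕ) = α.parts

/-- The set partition `A_λ` attached to a multicomposition: consecutive blocks of sizes
`|λ^{(1)}|, …, |λ^{(r)}|`. -/
def mcSetoid (n r : ℕ) (lam : ℕ → List ℕ) : Setoid (Fin n) :=
  Setoid.ker (fun x : Fin n => blockIdx (compList r lam) (x : ℕ))

/-- Membership in the Young subgroup `S_λ` of a multicomposition. -/
def inYoungM {n : ℕ} (r : ℕ) (lam : ℕ → List ℕ) (w : Equiv.Perm (Fin n)) : Prop :=
  inYoung (flattenM r lam) w

/-- `x_λ = Σ_{w ∈ S_λ} q^{ℓ(w)} g_w`. -/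
def xlam (n r : ℕ) (lam : ℕ → List ℕ) (gw : Equiv.Perm (Fin n) → BT n) : BT n :=
  ∑ w ∈ Finset.univ.filter (fun w : Equiv.Perm (Fin n) => inYoungM r lam w),
    (qq ^ invLen w) • gw w

/-- `y_λ = Σ_{w ∈ S_λ} (-q)^{-ℓ(w)} g_w`. -/
def ylam (n r : ℕ) (lam : ℕ → List ℕ) (gw : Equiv.Perm (Fin n) → BT n) : BT n :=
  ∑ w ∈ Finset.univ.filter (fun w : Equiv.Perm (Fin n) => inYoungM r lam w),
    (nqinvpow (invLen w)) • gw w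

/-! ### Multitableaux -/

/-- A cell `(component, row, column)`. -/
abbrev Cl : Type := ℕ × ℕ × ℕ

/-- Membership of a cell in the Young diagram of `lam`. -/
def InD (lam : ℕ → List ℕ) (c : Cl) : Prop := c.2.2 < (lam c.1).getD c.2.1 0

/-- A bijection of `{1,…,m}` with the diagram of `lam`: a multitableau. -/
def IsTabOn (m : ℕ) (lam : ℕ → List ℕ) (t : Fin m → Cl) : Prop :=
  Function.Injective t ∧ (∀ j, InD lam (t j)) ∧ (∀ c, InD lam c → ∃ j, t j = c)

/-- A row-standard multitableau. -/
def IsRowStd (m : ℕ) (lam : ℕ → List ℕ) (t : Fin m → Cl) : Prop :=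
  IsTabOn m lam t ∧ ∀ j k : Fin m, (t j).1 = (t k).1 → (t j).2.1 = (t k).2.1 →
    (t j).2.2 < (t k).2.2 → j < k

/-- A standard multitableau. -/
def IsStd (m : ℕ) (lam : ℕ → List ℕ) (t : Fin m → Cl) : Prop :=
  IsRowStd m lam t ∧ ∀ j k : Fin m, (t j).1 = (t k).1 → (t j).2.2 = (t k).2.2 →
    (t j).2.1 < (t k).2.1 → j < k

/-- Row-reading order on cells. -/
def rdLt (c d : Cl) : Prop :=
  c.1 < d.1 ∨ (c.1 = d.1 ∧ (c.2.1 < d.2.1 ∨ (c.2.1 = d.2.1 ∧ c.2.2 < d.2.2)))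

/-- Column-reading order on cells. -/
def cdLt (c d : Cl) : Prop :=
  c.1 < d.1 ∨ (c.1 = d.1 ∧ (c.2.2 < d.2.2 ∨ (c.2.2 = d.2.2 ∧ c.2.1 < d.2.1)))

/-- The row-reading multitableau `t^λ`. -/
def IsRowReading (m : ℕ) (lam : ℕ → List ℕ) (t : Fin m → Cl) : Prop :=
  IsTabOn m lam t ∧ ∀ j k : Fin m, j < k → rdLt (t j) (t k)

/-- The column-reading multitableau `t_λ`. -/
def IsColReading (m : ℕ) (lam : ℕ → List ℕ) (t : Fin m → Cl) : Prop :=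
  IsTabOn m lam t ∧ ∀ j k : Fin m, j < k → cdLt (t j) (t k)

/-- Conjugate of a partition (as a list). -/
def conjL (c : List ℕ) : List ℕ :=
  (List.range (c.foldr max 0)).map (fun b => c.countP (fun x => decide (b < x)))

/-- Componentwise conjugate of a multipartition. -/
def conjSh (lam : ℕ → List ℕ) : ℕ → List ℕ := fun i => conjL (lam i)

/-- Conjugate of a multitableau. -/
def conjT {m : ℕ} (t : Fin m → Cl) : Fin m → Cl := fun j => ((t j).1, (t j).2.2, (t j).2.1)

/-- Number of entries `< mm` of `t` lying in component `i`, rows `≤ a`. -/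
def cntT {m : ℕ} (t : Fin m → Cl) (mm i a : ℕ) : ℕ :=
  (Finset.univ.filter (fun j : Fin m => (j : ℕ) < mm ∧ (t j).1 = i ∧ (t j).2.1 ≤ a)).card

/-- Dominance order on multitableaux: `TabDom t s` means `t ⊴ s`. -/
def TabDom {m : ℕ} (t s : Fin m → Cl) : Prop := ∀ mm i a, cntT t mm i a ≤ cntT s mm i a

/-- `D lam t` is the permutation `d(t)` with `t = t^λ · d(t)`. -/
def DSpecF (n : ℕ) (D : (ℕ → List ℕ) → (Fin n → Cl) → Equiv.Perm (Fin n)) : Prop :=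
  ∀ lam t, IsTabOn n lam t → ∀ tl, IsRowReading n lam tl → ∀ j, tl (D lam t j) = t j

/-! ### The poset `L_n(α)` -/

/-- Dominance order on partitions/compositions given as lists. -/
def LDom (c d : List ℕ) : Prop := ∀ k, (c.take k).sum ≤ (d.take k).sum

/-- `lt` is (the strict form of) a total order on partitions extending the dominance order. -/
def LtSpec (lt : List ℕ → List ℕ → Prop) : Prop :=
  Transitive lt ∧ (∀ c, ¬ lt c c) ∧ (∀ c d, c ≠ d → lt c d ∨ lt d c) ∧
  (∀ c d, c ≠ d → c.sum = d.sum → LDom c d → lt c d)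

/-- Validity of the datum `Λ = (λ | μ) ∈ L_n(α)`: `λ` is an increasing `r`-multipartition of `n`
of type `α` and `μ` is an `s'`-multipartition of `r` whose component sizes are the multiplicities
of the distinct components of `λ`. -/
def LnValid (n r : ℕ) (α : Nat.Partition n) (s' : ℕ) (lam msh : ℕ → List ℕ)
    (lt : List ℕ → List ℕ → Prop) : Prop :=
  MC n r lam ∧ (∀ i, IsPart (lam i)) ∧ MCtype n r lam α ∧
  (∀ i j, i < j → j < r → lam i = lam j ∨ lt (lam i) (lam j)) ∧
  MC r s' msh ∧ (∀ j, IsPart (msh j)) ∧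
  ((List.range r).map lam).dedup.length = s' ∧
  (∀ j, j < s' → (msh j).sum =
    ((List.range r).map lam).count (((List.range r).map lam).dedup.getD j []))

/-- A pair `(𝔱 | u)` representing a `Λ`-tableau. -/
abbrev PairT (n r : ℕ) : Type := (Fin n → Cl) × (Fin r → Cl)

/-- `u` is of the initial kind. -/
def InitialKind (r : ℕ) (msh : ℕ → List ℕ) (u : Fin r → Cl) : Prop :=
  ∀ tl, IsRowReading r msh tl → ∀ j, (u j).1 = (tl j).1

/-- The multitableau `t` is increasing. -/
def Increasing (n r : ℕ) (lam : ℕ → List ℕ) (t : Fin n → Cl) : Prop :=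
  ∀ i j : ℕ, i < j → j < r → lam i = lam j →
    (Finset.univ.filter (fun k : Fin n => (t k).1 = i)).min <
    (Finset.univ.filter (fun k : Fin n => (t k).1 = j)).min

/-- Row-standard `Λ`-tableaux. -/
def RowStdPair (n r : ℕ) (lam msh : ℕ → List ℕ) (p : PairT n r) : Prop :=
  IsRowStd n lam p.1 ∧ Increasing n r lam p.1 ∧ IsRowStd r msh p.2 ∧ InitialKind r msh p.2

/-- Standard `Λ`-tableaux. -/
def StdPair (n r : ℕ) (lam msh : ℕ → List ℕ) (p : PairT n r) : Prop :=
  IsStd n lam p.1 ∧ Increasing n r lam p.1 ∧ IsStd r msh p.2 ∧ InitialKind r msh p.2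

/-- Conjugate of a `Λ`-tableau. -/
def conjPair {n r : ℕ} (p : PairT n r) : PairT n r := (conjT p.1, conjT p.2)

/-- Dominance order on `Λ`-tableaux. -/
def PairDom {n r : ℕ} (t s : PairT n r) : Prop :=
  TabDom t.1 s.1 ∧ (t.1 = s.1 → TabDom t.2 s.2)

/-! ### The multiplicity group, `b_μ`, `c_μ` and the (dual) cellular basis -/

/-- Membership in the Young subgroup `S_μ ≤ S_r` of the multipartition `μ` of `r`. -/
def inSmu (r s' : ℕ) (msh : ℕ → List ℕ) (σ : Equiv.Perm (Fin r)) : Prop :=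
  ∀ x : Fin r, blockIdx (flattenM s' msh) ((σ x : ℕ)) = blockIdx (flattenM s' msh) (x : ℕ)

/-- Membership in the multiplicity group `S^m_Λ` (permutations of components fixing `λ`). -/
def inSm (r : ℕ) (lam : ℕ → List ℕ) (σ : Equiv.Perm (Fin r)) : Prop :=
  ∀ i : Fin r, lam ((σ i : ℕ)) = lam (i : ℕ)

/-- The element `b_μ = ι(x_μ(1))`. -/
def bmuE {n r : ℕ} (s' : ℕ) (msh : ℕ → List ℕ) (Bb : Equiv.Perm (Fin r) → BT n) : BT n :=
  ∑ σ ∈ Finset.univ.filter (fun σ : Equiv.Perm (Fin r) => inSmu r s' msh σ), Bb σ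

/-- The element `c_μ = ι(y_μ(1))`. -/
def cmuE {n r : ℕ} (s' : ℕ) (msh : ℕ → List ℕ) (Bb : Equiv.Perm (Fin r) → BT n) : BT n :=
  ∑ σ ∈ Finset.univ.filter (fun σ : Equiv.Perm (Fin r) => inSmu r s' msh σ),
    ((Equiv.Perm.sign σ : ℤ)) • Bb σ

/-- `Bb lam` is the embedding `ι` of the multiplicity group of `λ` into `E_n^α(q)`,
`σ ↦ 𝔹_σ`: multiplicative and injective on `S^m_Λ`. -/
def BbSpec (n r : ℕ) (Bb : (ℕ → List ℕ) → Equiv.Perm (Fin r) → BT n) : Prop :=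
  ∀ lam, (∀ σ τ, inSm r lam σ → inSm r lam τ → Bb lam (σ * τ) = Bb lam σ * Bb lam τ) ∧
    (∀ σ τ, inSm r lam σ → inSm r lam τ → Bb lam σ = Bb lam τ → σ = τ)

/-- `Dr msh u` is the element `d(u)` of the multiplicity group for a `μ`-multitableau `u`. -/
def DrSpecF (r : ℕ) (Dr : (ℕ → List ℕ) → (Fin r → Cl) → Equiv.Perm (Fin r)) : Prop :=
  ∀ msh u, IsTabOn r msh u → ∀ tl, IsRowReading r msh tl → ∀ j, tl (Dr msh u j) = u j

/-- The anti-automorphism `*` of the braids-and-ties algebra. -/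
def StarSpec {n : ℕ} (st : BT n → BT n) : Prop :=
  (∀ x y, st (x + y) = st x + st y) ∧ (∀ (c : Sring) x, st (c • x) = c • st x) ∧
  (∀ x y, st (x * y) = st y * st x) ∧ st 1 = 1 ∧
  (∀ i, st (bg i) = bg i) ∧ (∀ i, st (be i) = be i)

/-- The basis element `x_s = 𝔼_λ x_λ g_{d(s)}` of the permutation module `M(λ)`. -/
def xsE (n r : ℕ) (mu : Setoid (Fin n) → Setoid (Fin n) → ℤ)
    (gw : Equiv.Perm (Fin n) → BT n)
    (D : (ℕ → List ℕ) → (Fin n → Cl) → Equiv.Perm (Fin n))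
    (lam : ℕ → List ℕ) (t : Fin n → Cl) : BT n :=
  bE mu (mcSetoid n r lam) * xlam n r lam gw * gw (D lam t)

/-- The basis element `m_t = 𝔼_λ x_λ b_μ 𝔹_{d(u)} g_{d(𝔱)}` of the permutation module `M(Λ)`. -/
def mBase (n r : ℕ) (mu : Setoid (Fin n) → Setoid (Fin n) → ℤ)
    (gw : Equiv.Perm (Fin n) → BT n)
    (D : (ℕ → List ℕ) → (Fin n → Cl) → Equiv.Perm (Fin n))
    (Dr : (ℕ → List ℕ) → (Fin r → Cl) → Equiv.Perm (Fin r))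
    (Bb : (ℕ → List ℕ) → Equiv.Perm (Fin r) → BT n)
    (s' : ℕ) (lam msh : ℕ → List ℕ) (p : PairT n r) : BT n :=
  bE mu (mcSetoid n r lam) * xlam n r lam gw * bmuE s' msh (Bb lam) *
    Bb lam (Dr msh p.2) * gw (D lam p.1)

/-- The cellular basis element `m_{s t}`. -/
def mstE (n r : ℕ) (mu : Setoid (Fin n) → Setoid (Fin n) → ℤ)
    (gw : Equiv.Perm (Fin n) → BT n) (st : BT n → BT n)
    (D : (ℕ → List ℕ) → (Fin n → Cl) → Equiv.Perm (Fin n))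
    (Dr : (ℕ → List ℕ) → (Fin r → Cl) → Equiv.Perm (Fin r))
    (Bb : (ℕ → List ℕ) → Equiv.Perm (Fin r) → BT n)
    (s' : ℕ) (lam msh : ℕ → List ℕ) (p q : PairT n r) : BT n :=
  bE mu (mcSetoid n r lam) * st (gw (D lam p.1)) * xlam n r lam gw *
    st (Bb lam (Dr msh p.2)) * bmuE s' msh (Bb lam) * Bb lam (Dr msh q.2) * gw (D lam q.1)

/-- The dual cellular basis element `n_{s t}`. -/
def nstE (n r : ℕ) (mu : Setoid (Fin n) → Setoid (Fin n) → ℤ)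
    (gw : Equiv.Perm (Fin n) → BT n) (st : BT n → BT n)
    (D : (ℕ → List ℕ) → (Fin n → Cl) → Equiv.Perm (Fin n))
    (Dr : (ℕ → List ℕ) → (Fin r → Cl) → Equiv.Perm (Fin r))
    (Bb : (ℕ → List ℕ) → Equiv.Perm (Fin r) → BT n)
    (s' : ℕ) (lam msh : ℕ → List ℕ) (p q : PairT n r) : BT n :=
  bE mu (mcSetoid n r lam) * st (gw (D lam p.1)) * ylam n r lam gw *
    st (Bb lam (Dr msh p.2)) * cmuE s' msh (Bb lam) * Bb lam (Dr msh q.2) * gw (D lam q.1)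

/-! ### Tensor space -/

/-- The tensor space `V^{⊗n}` for `dim V = N·r`. -/
abbrev Wmod (n N r : ℕ) : Type := (Fin n → Fin N × Fin r) → Sring

/-- Basis vector `v_{i̲}^{s̲}`. -/
def sing {n N r : ℕ} (b : Fin n → Fin N × Fin r) : Wmod n N r := Pi.single b 1

def ofBasis {n N r : ℕ} (φ : (Fin n → Fin N × Fin r) → Wmod n N r) :
    Module.End Sring (Wmod n N r) :=
  (Pi.basisFun Sring (Fin n → Fin N × Fin r)).constr Sring φ

/-- Action of `e_i` on basis vectors. -/
def eActB {n N r : ℕ} (i : Fin (n - 1)) (b : Fin n → Fin N × Fin r) : Wmod n N r :=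
  if (b (loF i)).2 = (b (hiF i)).2 then
    sing (Function.update (Function.update b (loF i) ((b (hiF i)).1, (b (loF i)).2))
      (hiF i) ((b (loF i)).1, (b (hiF i)).2))
  else 0

/-- Action of `g_i` on basis vectors. -/
def gActB {n N r : ℕ} (i : Fin (n - 1)) (b : Fin n → Fin N × Fin r) : Wmod n N r :=
  if (b (loF i)).2 ≠ (b (hiF i)).2 then sing (fun j => b (sT i j))
  else if (b (loF i)).1 = (b (hiF i)).1 then qq • sing b
  else if (b (loF i)).1 < (b (hiF i)).1 then sing (fun j => b (sT i j))
  else (qq - qinv) • sing b + sing (fun j => b (sT i j))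

/-- The operator `E_i` on `V^{⊗n}`. -/
def Eop {n N r : ℕ} (i : Fin (n - 1)) : Module.End Sring (Wmod n N r) := ofBasis (eActB i)

/-- The operator `G_i` on `V^{⊗n}`. -/
def Gop {n N r : ℕ} (i : Fin (n - 1)) : Module.End Sring (Wmod n N r) := ofBasis (gActB i)

/-- The vector `v_t` attached to a multitableau `t`. -/
def vOf {n : ℕ} (N r : ℕ) (hN : 0 < N) (hr : 0 < r) (t : Fin n → Cl) : Wmod n N r :=
  sing (fun j => (⟨(t j).2.1 % N, Nat.mod_lt _ hN⟩, ⟨(t j).1 % r, Nat.mod_lt _ hr⟩))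

end

/-- The one-component multishape attached to a single partition. -/
def sh1 (c : List ℕ) : ℕ → List ℕ := fun i => if i = 0 then c else []

/-! ### Auxiliary lemmas for statement1 -/

theorem Equiv.Perm.apply_inv_self {α : Type*} (f : Equiv.Perm α) (x : α) : f (f⁻¹ x) = x :=
  f.apply_symm_apply x

theorem Equiv.Perm.inv_apply_self {α : Type*} (f : Equiv.Perm α) (x : α) : f⁻¹ (f x) = x :=
  f.symm_apply_apply x

private lemma rdLt_asymm {c d : Cl} (h1 : rdLt c d) (h2 : rdLt d c) : False := by
  obtain ⟨a, b, e⟩ := c; obtain ⟨a', b', e'⟩ := d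
  simp only [rdLt] at h1 h2; omega

private lemma cdLt_asymm {c d : Cl} (h1 : cdLt c d) (h2 : cdLt d c) : False := by
  obtain ⟨a, b, e⟩ := c; obtain ⟨a', b', e'⟩ := d
  simp only [cdLt] at h1 h2; omega

private lemma rdLt_irrefl {c : Cl} (h : rdLt c c) : False := rdLt_asymm h h

private lemma cdLt_irrefl {c : Cl} (h : cdLt c c) : False := cdLt_asymm h h

private lemma rdLt_trichotomy (c d : Cl) : rdLt c d ∨ c = d ∨ rdLt d c := by
  obtain ⟨a, b, e⟩ := c; obtain ⟨a', b', e'⟩ := d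
  simp only [rdLt, Prod.mk.injEq]; omega

private lemma cdLt_trichotomy (c d : Cl) : cdLt c d ∨ c = d ∨ cdLt d c := by
  obtain ⟨a, b, e⟩ := c; obtain ⟨a', b', e'⟩ := d
  simp only [cdLt, Prod.mk.injEq]; omega

private lemma rdLt_conj_cell (c d : Cl) :
    rdLt (c.1, c.2.2, c.2.1) (d.1, d.2.2, d.2.1) ↔ cdLt c d := Iff.rfl

private lemma fin_sm_le {n : ℕ} {π : Fin n → Fin n} (h : StrictMono π) : ∀ m, m ≤ π m := by
  have key : ∀ K : ℕ, ∀ m : Fin n, (m : ℕ) ≤ K → m ≤ π m := by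
    intro K
    induction K with
    | zero =>
      intro m hm
      have : (m : ℕ) = 0 := Nat.le_zero.mp hm
      exact Fin.le_def.mpr (by omega)
    | succ K ih =>
      intro m hm
      by_contra hc
      push_neg at hc
      have h2 : π (π m) < π m := h hc
      have h3 : (π m : ℕ) ≤ K := by
        have := Fin.lt_def.mp hc; omega
      exact absurd (ih (π m) h3) (not_le.mpr h2)
  exact fun m => key (m : ℕ) m le_rfl

private lemma fin_sm_id {n : ℕ} {π : Fin n → Fin n} (h : StrictMono π) : ∀ m, π m = m := by
  have hbij : Function.Bijective π := Finite.injective_iff_bijective.mp h.injective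
  set e := Equiv.ofBijective π hbij with he
  have hesm : StrictMono e.symm := by
    intro a b hab
    rcases lt_trichotomy (e.symm a) (e.symm b) with h'|h'|h'
    · exact h'
    · exfalso
      have : a = b := by
        have := congrArg e h'
        simpa using this
      exact absurd this (ne_of_lt hab)
    · exfalso
      have h2 : π (e.symm b) < π (e.symm a) := h h'
      have hb : π (e.symm b) = b := e.apply_symm_apply b
      have ha : π (e.symm a) = a := e.apply_symm_apply a
      rw [hb, ha] at h2
      exact absurd hab (not_lt.mpr (le_of_lt h2))
  intro m
  have h1 : m ≤ π m := fin_sm_le h m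
  have h2 : π m ≤ e.symm (π m) := fin_sm_le hesm (π m)
  have h3 : e.symm (π m) = m := e.symm_apply_apply m
  rw [h3] at h2
  exact le_antisymm h2 h1

private lemma col_unique {n : ℕ} {lam : ℕ → List ℕ} {f g : Fin n → Cl}
    (hf : IsTabOn n lam f) (hg : IsTabOn n lam g)
    (hfm : ∀ j k : Fin n, j < k → cdLt (f j) (f k))
    (hgm : ∀ j k : Fin n, j < k → cdLt (g j) (g k)) :
    ∀ m, f m = g m := by
  have hex : ∀ m, ∃ j, f j = g m := fun m => hf.2.2 _ (hg.2.1 m)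
  choose π hπ using hex
  have hsm : StrictMono π := by
    intro a b hab
    rcases lt_trichotomy (π a) (π b) with h'|h'|h'
    · exact h'
    · exfalso
      have : g a = g b := by rw [← hπ, ← hπ, h']
      exact absurd (hg.1 this) (ne_of_lt hab)
    · exfalso
      have h1 := hfm _ _ h'
      rw [hπ, hπ] at h1
      exact cdLt_asymm h1 (hgm _ _ hab)
  intro m
  rw [← hπ m, fin_sm_id hsm m]

/-- for a partition `λ ⊢ n` and a standard `λ`-tableau `t` with conjugate `t′`,
`d(t)·d(t′)⁻¹ = w_λ` and `ℓ(d(t)) + ℓ(d(t′)) = ℓ(w_λ)`, where `w_λ = d(t_λ)`. -/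
theorem statement1 (n : ℕ) (lam : List ℕ) (hpart : IsPart lam) (hsum : lam.sum = n)
    (t tlam tcol tlam' : Fin n → Cl)
    (htlam : IsRowReading n (sh1 lam) tlam)
    (htcol : IsColReading n (sh1 lam) tcol)
    (htlam' : IsRowReading n (sh1 (conjL lam)) tlam')
    (hstd : IsStd n (sh1 lam) t)
    (dt dt' wlam : Equiv.Perm (Fin n))
    (hdt : ∀ j, tlam (dt j) = t j)
    (hdt' : ∀ j, tlam' (dt' j) = conjT t j)
    (hwlam : ∀ j, tlam (wlam j) = tcol j) :
    dt * dt'⁻¹ = wlam ∧ invLen dt + invLen dt' = invLen wlam := by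
  classical
  obtain ⟨⟨hlinj, hlInD, hlsurj⟩, hlmono⟩ := htlam
  obtain ⟨⟨hcinj, hcInD, hcsurj⟩, hcmono⟩ := htcol
  obtain ⟨⟨hl'inj, hl'InD, hl'surj⟩, hl'mono⟩ := htlam'
  obtain ⟨⟨⟨htinj, htInD, htsurj⟩, hrow⟩, hcol⟩ := hstd
  -- all cells of t have component 0
  have hcomp : ∀ j, (t j).1 = 0 := by
    intro j
    by_contra hc
    have h1 := htInD j
    simp only [InD, sh1, if_neg hc, List.getD] at h1
    simp at h1
  have htne : ∀ j k : Fin n, j ≠ k → t j ≠ t k := by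
    intro j k hjk he
    exact hjk (htinj he)
  -- characterization of inversions of dt
  have Lt1 : ∀ j k : Fin n, dt k < dt j ↔ rdLt (t k) (t j) := by
    intro j k
    constructor
    · intro h
      have h1 := hlmono _ _ h
      rwa [hdt, hdt] at h1
    · intro h
      rcases lt_trichotomy (dt k) (dt j) with h'|h'|h'
      · exact h'
      · exfalso
        have : k = j := dt.injective h'
        subst this
        exact rdLt_irrefl h
      · exfalso
        have h1 := hlmono _ _ h'
        rw [hdt, hdt] at h1
        exact rdLt_asymm h h1
  -- characterization of inversions of dt'
  have Lt2 : ∀ j k : Fin n, dt' k < dt' j ↔ cdLt (t k) (t j) := by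
    intro j k
    constructor
    · intro h
      have h1 := hl'mono _ _ h
      rw [hdt', hdt'] at h1
      exact (rdLt_conj_cell (t k) (t j)).mp h1
    · intro h
      rcases lt_trichotomy (dt' k) (dt' j) with h'|h'|h'
      · exact h'
      · exfalso
        have : k = j := dt'.injective h'
        subst this
        exact cdLt_irrefl h
      · exfalso
        have h1 := hl'mono _ _ h'
        rw [hdt', hdt'] at h1
        exact cdLt_asymm h ((rdLt_conj_cell (t j) (t k)).mp h1)
  -- characterization of inversions of wlam
  have Lt3 : ∀ a b : Fin n, wlam b < wlam a ↔ rdLt (tcol b) (tcol a) := by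
    intro a b
    constructor
    · intro h
      have h1 := hlmono _ _ h
      rwa [hwlam, hwlam] at h1
    · intro h
      rcases lt_trichotomy (wlam b) (wlam a) with h'|h'|h'
      · exact h'
      · exfalso
        have : b = a := wlam.injective h'
        subst this
        exact rdLt_irrefl h
      · exfalso
        have h1 := hlmono _ _ h'
        rw [hwlam, hwlam] at h1
        exact rdLt_asymm h h1
  have Lt4 : ∀ a b : Fin n, a < b ↔ cdLt (tcol a) (tcol b) := by
    intro a b
    constructor
    · exact hcmono a b
    · intro h
      rcases lt_trichotomy a b with h'|h'|h'
      · exact h'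
      · exfalso; subst h'; exact cdLt_irrefl h
      · exfalso; exact cdLt_asymm h (hcmono _ _ h')
  -- tcol = t ∘ dt'⁻¹
  have tcol_eq : ∀ a, tcol a = t (dt'⁻¹ a) := by
    apply col_unique ⟨hcinj, hcInD, hcsurj⟩ ?_ hcmono ?_
    · refine ⟨?_, ?_, ?_⟩
      · intro a b hab
        have := htinj hab
        exact dt'⁻¹.injective this
      · intro a; exact htInD _
      · intro c hc
        obtain ⟨j, hj⟩ := htsurj c hc
        exact ⟨dt' j, by show t (dt'⁻¹ (dt' j)) = c; rw [Equiv.Perm.inv_apply_self, hj]⟩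
    · intro a b hab
      have h1 : dt' (dt'⁻¹ a) < dt' (dt'⁻¹ b) := by
        rwa [Equiv.Perm.apply_inv_self, Equiv.Perm.apply_inv_self]
      exact (Lt2 (dt'⁻¹ b) (dt'⁻¹ a)).mp h1
  -- the key identity wlam ∘ dt' = dt
  have key : ∀ j, wlam (dt' j) = dt j := by
    intro j
    apply hlinj
    rw [hwlam, hdt, tcol_eq, Equiv.Perm.inv_apply_self]
  have hprod : dt * dt'⁻¹ = wlam := by
    ext j
    rw [Equiv.Perm.mul_apply, ← key (dt'⁻¹ j), Equiv.Perm.apply_inv_self]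
  -- standardness: a cell weakly NW in both orders forces a smaller entry
  have stdkey : ∀ j k : Fin n, rdLt (t k) (t j) → cdLt (t k) (t j) → k < j := by
    intro j k h1 h2
    have c0j := hcomp j
    have c0k := hcomp k
    have hr : (t k).2.1 ≤ (t j).2.1 ∧ (t k).2.2 ≤ (t j).2.2 ∧
        ((t k).2.1 ≠ (t j).2.1 ∨ (t k).2.2 ≠ (t j).2.2) := by
      simp only [rdLt, cdLt, c0j, c0k] at h1 h2
      omega
    have hInDe : InD (sh1 lam) (0, (t j).2.1, (t k).2.2) := by
      have h3 := htInD j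
      simp only [InD] at h3 ⊢
      rw [c0j] at h3
      show (t k).2.2 < (sh1 lam 0).getD (t j).2.1 0
      omega
    obtain ⟨m, hm⟩ := htsurj _ hInDe
    have hm1 : (t m).1 = 0 := by rw [hm]
    have hm2 : (t m).2.1 = (t j).2.1 := by rw [hm]
    have hm3 : (t m).2.2 = (t k).2.2 := by rw [hm]
    have hkm : k ≤ m := by
      rcases lt_or_eq_of_le hr.1 with h|h
      · exact le_of_lt (hcol k m (by rw [c0k, hm1]) (by rw [hm3]) (by rw [hm2]; exact h))
      · have hte : t k = t m := by
          rw [hm]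
          exact Prod.ext c0k (Prod.ext h rfl)
        exact le_of_eq (htinj hte)
    have hmj : m ≤ j := by
      rcases lt_or_eq_of_le hr.2.1 with h|h
      · exact le_of_lt (hrow m j (by rw [hm1, c0j]) (by rw [hm2]) (by rw [hm3]; exact h))
      · have hte : t m = t j := by
          rw [hm, h, ← c0j]
        exact le_of_eq (htinj hte)
    have hkj : k ≠ j := by
      intro he
      subst he
      rcases hr.2.2 with h|h <;> exact h rfl
    exact lt_of_le_of_ne (le_trans hkm hmj) hkj
  -- the cell of tcol at the image positions
  have tceq : ∀ x : Fin n, tcol (wlam⁻¹ (dt x)) = t x := by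
    intro x
    rw [← hwlam, Equiv.Perm.apply_inv_self, hdt]
  have tdeq : ∀ a : Fin n, t (dt⁻¹ (wlam a)) = tcol a := by
    intro a
    rw [← hdt, Equiv.Perm.apply_inv_self, hwlam]
  refine ⟨hprod, ?_⟩
  -- counting inversions
  unfold invLen
  set S1 := (Finset.univ : Finset (Fin n × Fin n)).filter
      (fun p => p.1 < p.2 ∧ dt p.2 < dt p.1) with hS1def
  set S2 := (Finset.univ : Finset (Fin n × Fin n)).filter
      (fun p => p.1 < p.2 ∧ dt' p.2 < dt' p.1) with hS2def
  set S3 := (Finset.univ : Finset (Fin n × Fin n)).filter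
      (fun p => p.1 < p.2 ∧ wlam p.2 < wlam p.1) with hS3def
  have hdisj : Disjoint S1 S2 := by
    rw [Finset.disjoint_left]
    intro p hp1 hp2
    rw [hS1def, Finset.mem_filter] at hp1
    rw [hS2def, Finset.mem_filter] at hp2
    have h1 := (Lt1 p.1 p.2).mp hp1.2.2
    have h2 := (Lt2 p.1 p.2).mp hp2.2.2
    exact absurd hp1.2.1 (not_lt.mpr (le_of_lt (stdkey p.1 p.2 h1 h2)))
  have hunion : (S1 ∪ S2).card = S3.card := by
    refine Finset.card_bij'
      (fun p _ => if dt p.2 < dt p.1 then (wlam⁻¹ (dt p.1), wlam⁻¹ (dt p.2))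
        else (wlam⁻¹ (dt p.2), wlam⁻¹ (dt p.1)))
      (fun q _ => if dt⁻¹ (wlam q.1) < dt⁻¹ (wlam q.2)
        then (dt⁻¹ (wlam q.1), dt⁻¹ (wlam q.2)) else (dt⁻¹ (wlam q.2), dt⁻¹ (wlam q.1)))
      ?_ ?_ ?_ ?_
    · -- maps S1 ∪ S2 into S3
      intro p hp
      simp only [Finset.mem_union, hS1def, hS2def, Finset.mem_filter, Finset.mem_univ,
        true_and] at hp
      simp only [hS3def, Finset.mem_filter, Finset.mem_univ, true_and]
      rcases hp with ⟨hp1, hp2⟩ | ⟨hp1, hp2⟩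
      · rw [if_pos hp2]
        have hrd := (Lt1 p.1 p.2).mp hp2
        have hcd : cdLt (t p.1) (t p.2) := by
          rcases cdLt_trichotomy (t p.1) (t p.2) with h|h|h
          · exact h
          · exact absurd (htinj h) (ne_of_lt hp1)
          · exact absurd hp1 (not_lt.mpr (le_of_lt (stdkey _ _ hrd h)))
        constructor
        · apply (Lt4 _ _).mpr
          rw [tceq, tceq]
          exact hcd
        · rw [Equiv.Perm.apply_inv_self, Equiv.Perm.apply_inv_self]
          exact hp2
      · have hcd := (Lt2 p.1 p.2).mp hp2
        have hnot : ¬ dt p.2 < dt p.1 := fun h =>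
          absurd hp1 (not_lt.mpr (le_of_lt (stdkey _ _ ((Lt1 _ _).mp h) hcd)))
        rw [if_neg hnot]
        have hrd : rdLt (t p.1) (t p.2) := by
          rcases rdLt_trichotomy (t p.1) (t p.2) with h|h|h
          · exact h
          · exact absurd (htinj h) (ne_of_lt hp1)
          · exact absurd hp1 (not_lt.mpr (le_of_lt (stdkey _ _ h hcd)))
        constructor
        · apply (Lt4 _ _).mpr
          rw [tceq, tceq]
          exact hcd
        · rw [Equiv.Perm.apply_inv_self, Equiv.Perm.apply_inv_self]
          exact (Lt1 p.2 p.1).mpr hrd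
    · -- maps S3 into S1 ∪ S2
      intro q hq
      simp only [hS3def, Finset.mem_filter, Finset.mem_univ, true_and] at hq
      have hrd : rdLt (t (dt⁻¹ (wlam q.2))) (t (dt⁻¹ (wlam q.1))) := by
        rw [tdeq, tdeq]
        exact (Lt3 q.1 q.2).mp hq.2
      have hcd : cdLt (t (dt⁻¹ (wlam q.1))) (t (dt⁻¹ (wlam q.2))) := by
        rw [tdeq, tdeq]
        exact (Lt4 q.1 q.2).mp hq.1
      have hne : dt⁻¹ (wlam q.1) ≠ dt⁻¹ (wlam q.2) := by
        intro h
        have h2 : wlam q.1 = wlam q.2 := dt⁻¹.injective h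
        exact (ne_of_lt hq.1) (wlam.injective h2)
      simp only [Finset.mem_union, hS1def, hS2def, Finset.mem_filter, Finset.mem_univ,
        true_and]
      rcases lt_or_gt_of_ne hne with h|h
      · rw [if_pos h]
        exact Or.inl ⟨h, (Lt1 _ _).mpr hrd⟩
      · rw [if_neg (not_lt.mpr (le_of_lt h))]
        exact Or.inr ⟨h, (Lt2 _ _).mpr hcd⟩
    · -- left inverse
      intro p hp
      simp only [Finset.mem_union, hS1def, hS2def, Finset.mem_filter, Finset.mem_univ,
        true_and] at hp
      rcases hp with ⟨hp1, hp2⟩ | ⟨hp1, hp2⟩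
      · rw [if_pos hp2]
        simp only [Equiv.Perm.apply_inv_self, Equiv.Perm.inv_apply_self]
        rw [if_pos hp1]
      · have hcd := (Lt2 p.1 p.2).mp hp2
        have hnot : ¬ dt p.2 < dt p.1 := fun h =>
          absurd hp1 (not_lt.mpr (le_of_lt (stdkey _ _ ((Lt1 _ _).mp h) hcd)))
        rw [if_neg hnot]
        simp only [Equiv.Perm.apply_inv_self, Equiv.Perm.inv_apply_self]
        rw [if_neg (not_lt.mpr (le_of_lt hp1))]
    · -- right inverse
      intro q hq
      simp only [hS3def, Finset.mem_filter, Finset.mem_univ, true_and] at hq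
      have hne : dt⁻¹ (wlam q.1) ≠ dt⁻¹ (wlam q.2) := by
        intro h
        have h2 : wlam q.1 = wlam q.2 := dt⁻¹.injective h
        exact (ne_of_lt hq.1) (wlam.injective h2)
      rcases lt_or_gt_of_ne hne with h|h
      · rw [if_pos h]
        simp only [Equiv.Perm.apply_inv_self, Equiv.Perm.inv_apply_self]
        rw [if_pos hq.2]
      · rw [if_neg (not_lt.mpr (le_of_lt h))]
        simp only [Equiv.Perm.apply_inv_self, Equiv.Perm.inv_apply_self]
        rw [if_neg (not_lt.mpr (le_of_lt hq.2))]
  have hcards := Finset.card_union_of_disjoint hdisj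
  omega
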